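/- For the Gaussian function q_κ^x(t) = (√κ/(2π)^{1/4})·exp(−κ²(t−x)²/4) and the antiderivative operator (∂₀^{-1}f)(t) = (1/2)∫_{−∞}^t f − (1/2)∫_t^∞ f, the quantity |∫_ℝ q_κ^x(t)·(κ/√(2π))·(∂₀^{-1}q_κ^y)(t) dt| is bounded by a constant independent of κ > 0 and x, y ∈ ℝ. -/

import Mathlib

open MeasureTheory Real

/-- The 1-dimensional Gaussian factor `q_κ^x`. -/
noncomputable def qGauss (κ x t : ℝ) : ℝ :=
  (Real.sqrt κ / (2 * Real.pi) ^ ((1 : ℝ) / 4)) * Real.exp (-κ ^ 2 * (t - x) ^ 2 / 4)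

/-- The half-space primitive `∂₀⁻¹ q_κ^x`. -/
noncomputable def qGaussPrim (κ x t : ℝ) : ℝ :=
  (1 / 2) * (∫ τ in Set.Iic t, qGauss κ x τ) - (1 / 2) * (∫ τ in Set.Ici t, qGauss κ x τ)

lemma qGauss_nonneg (κ x t : ℝ) : 0 ≤ qGauss κ x t := by
  unfold qGauss
  positivity

lemma qGauss_eq (κ x t : ℝ) :
    qGauss κ x t = (Real.sqrt κ / (2 * Real.pi) ^ ((1 : ℝ) / 4)) *
      Real.exp (-(κ ^ 2 / 4) * (t - x) ^ 2) := by
  unfold qGauss; ring_nf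

lemma integrable_qGauss {κ : ℝ} (hκ : 0 < κ) (x : ℝ) : Integrable (qGauss κ x) := by
  have : Integrable (fun t : ℝ => Real.exp (-(κ ^ 2 / 4) * t ^ 2)) :=
    integrable_exp_neg_mul_sq (by positivity)
  simpa only [← qGauss_eq] using (this.comp_sub_right x).const_mul
    (Real.sqrt κ / (2 * Real.pi) ^ ((1 : ℝ) / 4))

lemma integral_qGauss {κ : ℝ} (hκ : 0 < κ) (x : ℝ) :
    ∫ t, qGauss κ x t =
      (Real.sqrt κ / (2 * Real.pi) ^ ((1 : ℝ) / 4)) * (2 * Real.sqrt Real.pi / κ) := by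
  simp only [qGauss_eq]
  rw [MeasureTheory.integral_const_mul,
    integral_sub_right_eq_self (fun t => Real.exp (-(κ ^ 2 / 4) * t ^ 2)) x,
    integral_gaussian]
  congr 1
  rw [Real.sqrt_div pi_pos.le, show κ ^ 2 / 4 = (κ / 2) ^ 2 by ring,
    Real.sqrt_sq (by positivity)]
  field_simp

lemma qGaussPrim_abs_le {κ : ℝ} (hκ : 0 < κ) (y t : ℝ) :
    |qGaussPrim κ y t| ≤ (1 / 2) * ∫ τ, qGauss κ y τ := by
  have hint := integrable_qGauss hκ y
  have hnn : ∀ τ, 0 ≤ qGauss κ y τ := qGauss_nonneg κ y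
  have h1 : ∫ τ in Set.Iic t, qGauss κ y τ ≤ ∫ τ, qGauss κ y τ :=
    setIntegral_le_integral hint (Filter.Eventually.of_forall hnn)
  have h2 : ∫ τ in Set.Ici t, qGauss κ y τ ≤ ∫ τ, qGauss κ y τ :=
    setIntegral_le_integral hint (Filter.Eventually.of_forall hnn)
  have h1' : 0 ≤ ∫ τ in Set.Iic t, qGauss κ y τ :=
    setIntegral_nonneg measurableSet_Iic fun τ _ => hnn τ
  have h2' : 0 ≤ ∫ τ in Set.Ici t, qGauss κ y τ :=
    setIntegral_nonneg measurableSet_Ici fun τ _ => hnn τ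
  rw [qGaussPrim, abs_sub_le_iff]
  constructor <;> nlinarith

/-- `|⟨q_κ^x, (κ/√(2π)) ∂₀⁻¹ q_κ^y⟩|` is bounded by a constant independent of `κ, x, y`. -/
theorem stmt_3 :
    ∃ C : ℝ, ∀ κ : ℝ, 0 < κ → ∀ x y : ℝ,
      |∫ t : ℝ, qGauss κ x t * ((κ / Real.sqrt (2 * Real.pi)) * qGaussPrim κ y t)| ≤ C := by
  refine ⟨1, fun κ hκ x y => ?_⟩
  set I : ℝ := (Real.sqrt κ / (2 * Real.pi) ^ ((1 : ℝ) / 4)) * (2 * Real.sqrt Real.pi / κ)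
    with hI
  have hc : 0 < κ / Real.sqrt (2 * Real.pi) := by positivity
  have hInn : 0 ≤ I := by rw [hI]; positivity
  have hbound : ∀ t, |qGauss κ x t * ((κ / Real.sqrt (2 * Real.pi)) * qGaussPrim κ y t)|
      ≤ qGauss κ x t * ((κ / Real.sqrt (2 * Real.pi)) * ((1 / 2) * I)) := by
    intro t
    rw [abs_mul, abs_mul, abs_of_nonneg (qGauss_nonneg κ x t), abs_of_nonneg hc.le]
    have := qGaussPrim_abs_le hκ y t
    rw [← integral_qGauss hκ y] at hI
    have h2 : |qGaussPrim κ y t| ≤ (1 / 2) * I := by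
      rw [hI]; exact qGaussPrim_abs_le hκ y t
    have h3 : (κ / Real.sqrt (2 * Real.pi)) * |qGaussPrim κ y t|
        ≤ (κ / Real.sqrt (2 * Real.pi)) * ((1 / 2) * I) :=
      mul_le_mul_of_nonneg_left h2 hc.le
    exact mul_le_mul_of_nonneg_left h3 (qGauss_nonneg κ x t)
  calc |∫ t : ℝ, qGauss κ x t * ((κ / Real.sqrt (2 * Real.pi)) * qGaussPrim κ y t)|
      ≤ ∫ t : ℝ, |qGauss κ x t * ((κ / Real.sqrt (2 * Real.pi)) * qGaussPrim κ y t)| :=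
      by
        simpa only [Real.norm_eq_abs] using norm_integral_le_integral_norm
          (fun t : ℝ => qGauss κ x t * ((κ / Real.sqrt (2 * Real.pi)) * qGaussPrim κ y t))
    _ ≤ ∫ t : ℝ, qGauss κ x t * ((κ / Real.sqrt (2 * Real.pi)) * ((1 / 2) * I)) := by
        refine integral_mono_of_nonneg (Filter.Eventually.of_forall fun t => abs_nonneg _)
          ((integrable_qGauss hκ x).mul_const _) (Filter.Eventually.of_forall hbound)
    _ = I * ((κ / Real.sqrt (2 * Real.pi)) * ((1 / 2) * I)) := by
        rw [MeasureTheory.integral_mul_const, integral_qGauss hκ x]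
    _ ≤ 1 := by
        rw [hI]
        have h2π : (0:ℝ) < 2 * Real.pi := by positivity
        have hp : ((2 * Real.pi) ^ ((1 : ℝ) / 4)) ^ 2 = Real.sqrt (2 * Real.pi) := by
          rw [← Real.rpow_natCast ((2 * Real.pi) ^ ((1 : ℝ) / 4)) 2,
            ← Real.rpow_mul h2π.le]
          norm_num [Real.sqrt_eq_rpow]
        have hsκ : Real.sqrt κ ^ 2 = κ := Real.sq_sqrt hκ.le
        have hsπ : Real.sqrt Real.pi ^ 2 = Real.pi := Real.sq_sqrt pi_pos.le
        have hs2π : Real.sqrt (2 * Real.pi) ^ 2 = 2 * Real.pi := Real.sq_sqrt h2π.le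
        have key : (Real.sqrt κ / (2 * Real.pi) ^ ((1 : ℝ) / 4) * (2 * Real.sqrt Real.pi / κ)) *
            ((κ / Real.sqrt (2 * Real.pi)) *
              ((1 / 2) * (Real.sqrt κ / (2 * Real.pi) ^ ((1 : ℝ) / 4) *
                (2 * Real.sqrt Real.pi / κ)))) = 1 := by
          have e : (Real.sqrt κ / (2 * Real.pi) ^ ((1 : ℝ) / 4) * (2 * Real.sqrt Real.pi / κ)) *
              ((κ / Real.sqrt (2 * Real.pi)) *
                ((1 / 2) * (Real.sqrt κ / (2 * Real.pi) ^ ((1 : ℝ) / 4) *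
                  (2 * Real.sqrt Real.pi / κ)))) =
              (Real.sqrt κ ^ 2 * Real.sqrt Real.pi ^ 2 * 2 * κ) /
                (((2 * Real.pi) ^ ((1 : ℝ) / 4)) ^ 2 * Real.sqrt (2 * Real.pi) * κ ^ 2) := by
            ring
          rw [e, hsκ, hsπ, hp, ← sq, hs2π]
          rw [div_eq_one_iff_eq (by positivity)]
          ring
        exact key.le
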